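/- Let (g,σ,B) be a symmetric triple with eigenspace decomposition g = h ⊕ m, and suppose m = z ⊕ W ⊕ z* is a direct sum of subspaces such that z = z(g) is the center of g and is totally isotropic, B(z,W) = 0, ⁅h, z ⊕ W⁆ ⊆ z, and ⁅h, z*⁆ ⊆ z ⊕ W. Then: (1) ⁅W,W⁆ = 0, so z ⊕ W is an abelian subalgebra of g; (2) ⁅⁅z*,W⁆, h⁆ = 0, i.e. the subspace ⁅z*,W⁆ of h is central in h; (3) ⁅⁅z*,z*⁆, h⁆ ⊆ ⁅z*,W⁆; consequently ⁅⁅h,h⁆, h⁆ = 0, i.e. the holonomy algebra h is abelian or two-step nilpotent. -/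

import Mathlib

/-- For a symmetric triple with a decomposition `m = z ⊕ W ⊕ z*`
(`z = z(g)` totally isotropic, `B(z,W)=0`, `⁅h, z ⊕ W⁆ ⊆ z`, `⁅h, z*⁆ ⊆ z ⊕ W`):
(1) `⁅W,W⁆ = 0`, so `z ⊕ W` is abelian; (2) `⁅z*,W⁆` is central in `h`;
(3) `⁅⁅z*,z*⁆,h⁆ ⊆ ⁅z*,W⁆`; consequently `h` is abelian or two-step nilpotent. -/
theorem holonomy_two_step_nilpotent
    (L : Type*) [LieRing L] [LieAlgebra ℝ L] [FiniteDimensional ℝ L]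
    (σ : L →ₗ⁅ℝ⁆ L) (hσ : ∀ x, σ (σ x) = x)
    (H M : Submodule ℝ L)
    (hH : ∀ x, x ∈ H ↔ σ x = x)
    (hM : ∀ x, x ∈ M ↔ σ x = -x)
    (hcompl : IsCompl H M)
    (hHspan : H = Submodule.span ℝ {z : L | ∃ x ∈ M, ∃ y ∈ M, ⁅x, y⁆ = z})
    (B : LinearMap.BilinForm ℝ L)
    (hBnd : B.Nondegenerate)
    (hBsymm : ∀ x y : L, B x y = B y x)
    (hBσ : ∀ x y : L, B (σ x) (σ y) = B x y)
    (hBad : ∀ x y z : L, B ⁅x, y⁆ z = B x ⁅y, z⁆)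
    (W Zstar : Submodule ℝ L)
    (hWM : W ≤ M) (hZstarM : Zstar ≤ M)
    -- m = z ⊕ W ⊕ z* as an internal direct sum
    (hdisj₁ : Disjoint (LieAlgebra.center ℝ L).toSubmodule W)
    (hdisj₂ : Disjoint ((LieAlgebra.center ℝ L).toSubmodule ⊔ W) Zstar)
    (hsum : (LieAlgebra.center ℝ L).toSubmodule ⊔ W ⊔ Zstar = M)
    -- z is totally isotropic and B(z,W) = 0
    (hZiso : ∀ x ∈ LieAlgebra.center ℝ L, ∀ y ∈ LieAlgebra.center ℝ L, B x y = 0)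
    (hZW : ∀ x ∈ LieAlgebra.center ℝ L, ∀ y ∈ W, B x y = 0)
    -- ⁅h, z ⊕ W⁆ ⊆ z and ⁅h, z*⁆ ⊆ z ⊕ W
    (hbr₁ : ∀ h ∈ H, ∀ x ∈ (LieAlgebra.center ℝ L).toSubmodule ⊔ W,
      ⁅h, x⁆ ∈ (LieAlgebra.center ℝ L).toSubmodule)
    (hbr₂ : ∀ h ∈ H, ∀ x ∈ Zstar,
      ⁅h, x⁆ ∈ (LieAlgebra.center ℝ L).toSubmodule ⊔ W) :
    -- (1) ⁅W,W⁆ = 0, hence z ⊕ W is an abelian subalgebra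
    (∀ x ∈ W, ∀ y ∈ W, ⁅x, y⁆ = (0 : L)) ∧
    (∀ x ∈ (LieAlgebra.center ℝ L).toSubmodule ⊔ W,
      ∀ y ∈ (LieAlgebra.center ℝ L).toSubmodule ⊔ W, ⁅x, y⁆ = (0 : L)) ∧
    -- (2) ⁅z*,W⁆ is central in h
    (∀ a ∈ Zstar, ∀ w ∈ W, ∀ h ∈ H, ⁅⁅a, w⁆, h⁆ = (0 : L)) ∧
    -- (3) ⁅⁅z*,z*⁆, h⁆ ⊆ ⁅z*,W⁆
    (∀ a ∈ Zstar, ∀ b ∈ Zstar, ∀ h ∈ H,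
      ⁅⁅a, b⁆, h⁆ ∈ Submodule.span ℝ {x : L | ∃ c ∈ Zstar, ∃ w ∈ W, ⁅c, w⁆ = x}) ∧
    -- consequently h is abelian or two-step nilpotent
    (∀ h₁ ∈ H, ∀ h₂ ∈ H, ∀ h₃ ∈ H, ⁅⁅h₁, h₂⁆, h₃⁆ = (0 : L)) := by

  -- abbreviations
  set Z := (LieAlgebra.center ℝ L).toSubmodule with hZdef
  -- center elements bracket to zero
  have hcent : ∀ c ∈ Z, ∀ y : L, ⁅c, y⁆ = 0 ∧ ⁅y, c⁆ = 0 := by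
    intro c hc y
    have hc' : c ∈ LieAlgebra.center ℝ L := hc
    have h1 : ⁅y, c⁆ = 0 := hc' y
    constructor
    · rw [← lie_skew, h1, neg_zero]
    · exact h1
  -- brackets of M-elements land in H
  have hMbr : ∀ x ∈ M, ∀ y ∈ M, ⁅x, y⁆ ∈ H := by
    intro x hx y hy
    rw [hH]
    rw [LieHom.map_lie, (hM x).mp hx, (hM y).mp hy, neg_lie, lie_neg, neg_neg]
  -- H ⊥ M
  have hHM : ∀ p ∈ H, ∀ q ∈ M, B p q = 0 := by
    intro p hp q hq
    have h1 := hBσ p q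
    rw [(hH p).mp hp, (hM q).mp hq, map_neg] at h1
    linarith
  -- part 1 : ⁅W, W⁆ = 0
  have part1 : ∀ x ∈ W, ∀ y ∈ W, ⁅x, y⁆ = (0 : L) := by
    intro w hw w' hw'
    apply hBnd.1
    intro x
    have hx : x ∈ H ⊔ M := by rw [hcompl.sup_eq_top]; trivial
    obtain ⟨p, hp, q, hq, rfl⟩ := Submodule.mem_sup.mp hx
    have hbrH : ⁅w, w'⁆ ∈ H := hMbr w (hWM hw) w' (hWM hw')
    have h2 : B ⁅w, w'⁆ q = 0 := hHM _ hbrH q hq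
    have hcw : ⁅p, w'⁆ ∈ Z := hbr₁ p hp w' (Submodule.mem_sup_right hw')
    have h1 : B ⁅w, w'⁆ p = 0 := by
      rw [hBad, ← lie_skew, map_neg, hBsymm]
      rw [hZW _ hcw w hw, neg_zero]
    rw [map_add, h1, h2, add_zero]
  -- part 1b : z ⊕ W abelian
  have part1b : ∀ x ∈ Z ⊔ W, ∀ y ∈ Z ⊔ W, ⁅x, y⁆ = (0 : L) := by
    intro x hx y hy
    obtain ⟨c, hc, w, hw, rfl⟩ := Submodule.mem_sup.mp hx
    obtain ⟨c', hc', w', hw', rfl⟩ := Submodule.mem_sup.mp hy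
    rw [add_lie, lie_add, lie_add, (hcent c hc _).1, (hcent c hc _).1,
      (hcent c' hc' _).2, part1 w hw w' hw']
    simp
  -- part 2 : ⁅z*, W⁆ central in h
  have part2 : ∀ a ∈ Zstar, ∀ w ∈ W, ∀ h ∈ H, ⁅⁅a, w⁆, h⁆ = (0 : L) := by
    intro a ha w hw h hh
    rw [lie_lie]
    have h1 : ⁅h, w⁆ ∈ Z := hbr₁ h hh w (Submodule.mem_sup_right hw)
    have h2 : ⁅a, ⁅w, h⁆⁆ = 0 := by
      rw [← lie_skew w h] at *
      rw [lie_neg, (hcent _ h1 a).2, neg_zero]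
    obtain ⟨c, hc, w', hw', hEq⟩ := Submodule.mem_sup.mp (hbr₂ h hh a ha)
    have h3 : ⁅w, ⁅a, h⁆⁆ = 0 := by
      rw [← lie_skew a h, ← hEq, lie_neg, lie_add, (hcent c hc w).2,
        part1 w hw w' hw', add_zero, neg_zero]
    rw [h2, h3, sub_zero]
  -- the span of ⁅z*, W⁆
  set S : Set L := {x : L | ∃ c ∈ Zstar, ∃ w ∈ W, ⁅c, w⁆ = x} with hSdef
  -- part 3
  have part3 : ∀ a ∈ Zstar, ∀ b ∈ Zstar, ∀ h ∈ H,
      ⁅⁅a, b⁆, h⁆ ∈ Submodule.span ℝ S := by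
    intro a ha b hb h hh
    rw [lie_lie]
    obtain ⟨c, hc, w, hw, hEq⟩ := Submodule.mem_sup.mp (hbr₂ h hh b hb)
    obtain ⟨c', hc', w', hw', hEq'⟩ := Submodule.mem_sup.mp (hbr₂ h hh a ha)
    have h1 : ⁅a, ⁅b, h⁆⁆ = -⁅a, w⁆ := by
      rw [← lie_skew b h, ← hEq, lie_neg, lie_add, (hcent c hc a).2, zero_add]
    have h2 : ⁅b, ⁅a, h⁆⁆ = -⁅b, w'⁆ := by
      rw [← lie_skew a h, ← hEq', lie_neg, lie_add, (hcent c' hc' b).2, zero_add]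
    rw [h1, h2]
    have m1 : ⁅a, w⁆ ∈ Submodule.span ℝ S :=
      Submodule.subset_span ⟨a, ha, w, hw, rfl⟩
    have m2 : ⁅b, w'⁆ ∈ Submodule.span ℝ S :=
      Submodule.subset_span ⟨b, hb, w', hw', rfl⟩
    exact sub_mem (neg_mem m1) (neg_mem m2)
  -- any element of span S brackets to zero with H
  have spanS_zero : ∀ h ∈ H, ∀ u ∈ Submodule.span ℝ S, ⁅u, h⁆ = (0 : L) := by
    intro h hh u hu
    induction hu using Submodule.span_induction with
    | mem x hx =>
      obtain ⟨c, hc, w, hw, rfl⟩ := hx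
      exact part2 c hc w hw h hh
    | zero => rw [zero_lie]
    | add x y hx hy ihx ihy => rw [add_lie, ihx, ihy, add_zero]
    | smul r x hx ih => rw [smul_lie, ih, smul_zero]
  -- brackets of elements of M bracket into span S with H
  have stepb : ∀ h ∈ H, ∀ x ∈ M, ∀ y ∈ M, ⁅⁅x, y⁆, h⁆ ∈ Submodule.span ℝ S := by
    intro h hh x hx y hy
    rw [← hsum] at hx hy
    obtain ⟨u, hu, a, ha, rfl⟩ := Submodule.mem_sup.mp hx
    obtain ⟨v, hv, b, hb, rfl⟩ := Submodule.mem_sup.mp hy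
    obtain ⟨c, hc, w, hw, rfl⟩ := Submodule.mem_sup.mp hu
    obtain ⟨c', hc', w', hw', rfl⟩ := Submodule.mem_sup.mp hv
    have hEq : ⁅c + w + a, c' + w' + b⁆ = ⁅w, b⁆ + ⁅a, w'⁆ + ⁅a, b⁆ := by
      rw [add_lie, add_lie, lie_add, lie_add, lie_add, lie_add, lie_add, lie_add,
        (hcent c hc _).1, (hcent c hc _).1, (hcent c hc _).1,
        (hcent c' hc' _).2, (hcent c' hc' _).2, part1 w hw w' hw']
      abel
    rw [hEq, add_lie, add_lie]
    have t1 : ⁅⁅w, b⁆, h⁆ = 0 := by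
      rw [← lie_skew w b, neg_lie, part2 b hb w hw h hh, neg_zero]
    have t2 : ⁅⁅a, w'⁆, h⁆ = 0 := part2 a ha w' hw' h hh
    rw [t1, t2, zero_add, zero_add]
    exact part3 a ha b hb h hh
  -- general bracket of H-elements lies in span S
  have stepc : ∀ h₁ ∈ H, ∀ h₂ ∈ H, ⁅h₁, h₂⁆ ∈ Submodule.span ℝ S := by
    intro h₁ hh₁ h₂ hh₂
    rw [hHspan] at hh₁
    induction hh₁ using Submodule.span_induction with
    | mem x hx =>
      obtain ⟨u, hu, v, hv, rfl⟩ := hx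
      exact stepb h₂ hh₂ u hu v hv
    | zero => rw [zero_lie]; exact Submodule.zero_mem _
    | add x y hx hy ihx ihy => rw [add_lie]; exact Submodule.add_mem _ ihx ihy
    | smul r x hx ih => rw [smul_lie]; exact Submodule.smul_mem _ r ih
  refine ⟨part1, part1b, part2, part3, ?_⟩
  intro h₁ hh₁ h₂ hh₂ h₃ hh₃
  exact spanS_zero h₃ hh₃ _ (stepc h₁ hh₁ h₂ hh₂)
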